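/- Fix k ≥ 3 and let Rₖ be the subalgebra of (Aₖ, w^A)² generated by {(x,y) : x, y ∈ X, x ≠ y}. Then Rₖ is disjoint from the diagonal: there is no r ∈ Aₖ with (r,r) ∈ Rₖ. -/

import Mathlib

/-- Formal terms built from variables in `V` and a single `k`-ary operation symbol `w`. -/
inductive TermK (k : ℕ) (V : Type) : Type
  | var : V → TermK k V
  | w : (Fin k → TermK k V) → TermK k V

/-- Evaluation of a term in an algebra `(B, f)` under a variable assignment `σ`. -/
def TermK.eval {k : ℕ} {V B : Type} (f : (Fin k → B) → B) (σ : V → B) : TermK k V → B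
  | .var v => σ v
  | .w ts => f (fun i => (ts i).eval f σ)

/-- Renaming/substitution of variables in a term. -/
def TermK.rename {k : ℕ} {V V' : Type} (ρ : V → V') : TermK k V → TermK k V'
  | .var v => .var (ρ v)
  | .w ts => .w (fun i => (ts i).rename ρ)

/-- A `k`-ary operation `f` satisfies the `k`-wnu identities: `f(x,…,x) = x` and
the value of `f` on a tuple with a single `y` among `x`'s does not depend on the
position of the `y`. -/
def IsKWNU {k : ℕ} {B : Type} (f : (Fin k → B) → B) : Prop :=
  (∀ x, f (fun _ => x) = x) ∧
  ∀ (x y : B) (i j : Fin k),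
    f (Function.update (fun _ => x) i y) = f (Function.update (fun _ => x) j y)

/-- Two terms are equal modulo the equational theory generated by the `k`-wnu identities,
i.e. they evaluate equally in every algebra satisfying the `k`-wnu identities. -/
def EqWnuK {k : ℕ} {V : Type} (t s : TermK k V) : Prop :=
  ∀ (B : Type) (f : (Fin k → B) → B) (σ : V → B), IsKWNU f → t.eval f σ = s.eval f σ

/-- The set `Aₖ` of `k`-wnu normal forms (over the countably infinite variable set `ℕ`):
every variable is a normal form, and `w(a₁,…,aₖ)` is a normal form whenever
`a₁,…,aₖ` are normal forms and there are two distinct indices `i, j` with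
`a₁ ≠ aᵢ` and `a₁ ≠ aⱼ`. -/
inductive IsNFK {k : ℕ} [NeZero k] : TermK k ℕ → Prop
  | var (n : ℕ) : IsNFK (.var n)
  | w (ts : Fin k → TermK k ℕ) : (∀ i, IsNFK (ts i)) →
      (∃ i j : Fin k, i ≠ j ∧ ts 0 ≠ ts i ∧ ts 0 ≠ ts j) → IsNFK (.w ts)

open Classical in
/-- The normal-form operation `w^A` on `k`-ary terms:
`w^A(a,…,a) = a`; if some coordinate is `c` and all the others equal `d ≠ c` then the
value is `w(c,d,…,d)`; otherwise `w^A(a₁,…,aₖ) = w(a₁,…,aₖ)`. -/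
noncomputable def wAK {k : ℕ} [NeZero k] (ts : Fin k → TermK k ℕ) : TermK k ℕ :=
  if ∀ i, ts i = ts 0 then ts 0
  else if h : ∃ icd : Fin k × TermK k ℕ × TermK k ℕ,
      icd.2.1 ≠ icd.2.2 ∧ ∀ j, ts j = if j = icd.1 then icd.2.1 else icd.2.2 then
    TermK.w (fun l => if l = 0 then h.choose.2.1 else h.choose.2.2)
  else TermK.w ts

/-- The subterm relation `⪯` on `k`-wnu normal forms: the reflexive transitive closure of
`{(a,b) : a,b ∈ Aₖ, ∃ c₁,…,cₖ ∈ Aₖ, b = w(c₁,…,cₖ) ∧ a ∈ {c₁,…,cₖ}}`. -/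
def SubK {k : ℕ} [NeZero k] (a b : TermK k ℕ) : Prop :=
  Relation.ReflTransGen
    (fun s t => IsNFK s ∧ IsNFK t ∧ ∃ cs : Fin k → TermK k ℕ,
      (∀ i, IsNFK (cs i)) ∧ t = .w cs ∧ ∃ i, s = cs i) a b

/-- The subalgebra `Rₖ` of `(Aₖ, w^A)²` generated by the pairs of distinct variables:
the smallest set of pairs containing `{(x,y) : x ≠ y}` and closed under the
coordinatewise `k`-ary operation. -/
inductive InRK {k : ℕ} [NeZero k] : TermK k ℕ → TermK k ℕ → Prop
  | gen (x y : ℕ) : x ≠ y → InRK (.var x) (.var y)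
  | close (as bs : Fin k → TermK k ℕ) :
      (∀ i, InRK (as i) (bs i)) → InRK (wAK as) (wAK bs)


section Statement18Aux

variable {k : ℕ} [NeZero k]

private lemma exists_third (hk : 3 ≤ k) (i i' : Fin k) : ∃ j : Fin k, j ≠ i ∧ j ≠ i' := by
  have h0 : 0 < k := by omega
  have h1 : 1 < k := by omega
  have h2 : 2 < k := by omega
  by_cases a0 : (⟨0, h0⟩ : Fin k) ≠ i ∧ (⟨0, h0⟩ : Fin k) ≠ i'
  · exact ⟨_, a0⟩
  by_cases a1 : (⟨1, h1⟩ : Fin k) ≠ i ∧ (⟨1, h1⟩ : Fin k) ≠ i'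
  · exact ⟨_, a1⟩
  refine ⟨⟨2, h2⟩, fun h => ?_, fun h => ?_⟩ <;>
  · simp only [not_and_or, not_not] at a0 a1
    have v0 : (0 : ℕ) = i.val ∨ (0 : ℕ) = i'.val := by
      rcases a0 with h' | h'
      · exact Or.inl (congrArg Fin.val h')
      · exact Or.inr (congrArg Fin.val h')
    have v1 : (1 : ℕ) = i.val ∨ (1 : ℕ) = i'.val := by
      rcases a1 with h' | h'
      · exact Or.inl (congrArg Fin.val h')
      · exact Or.inr (congrArg Fin.val h')
    have v2 := congrArg Fin.val h
    simp only [Fin.val_mk] at v2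
    omega

private lemma wAK_spec (ts : Fin k → TermK k ℕ) :
    ((∀ i, ts i = ts 0) ∧ wAK ts = ts 0) ∨
    (∃ i c d, c ≠ d ∧ (∀ j, ts j = if j = i then c else d) ∧
      wAK ts = .w (fun l => if l = 0 then c else d)) ∨
    ((¬ ∀ i, ts i = ts 0) ∧
      (¬ ∃ i c d, c ≠ d ∧ (∀ j, ts j = if j = i then c else d)) ∧ wAK ts = .w ts) := by
  classical
  by_cases hc : ∀ i, ts i = ts 0
  · exact Or.inl ⟨hc, by unfold wAK; rw [if_pos hc]⟩
  by_cases hs : ∃ icd : Fin k × TermK k ℕ × TermK k ℕ,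
      icd.2.1 ≠ icd.2.2 ∧ ∀ j, ts j = if j = icd.1 then icd.2.1 else icd.2.2
  · refine Or.inr (Or.inl ⟨hs.choose.1, hs.choose.2.1, hs.choose.2.2,
      hs.choose_spec.1, hs.choose_spec.2, ?_⟩)
    unfold wAK; rw [if_neg hc, dif_pos hs]
  · refine Or.inr (Or.inr ⟨hc, ?_, by unfold wAK; rw [if_neg hc, dif_neg hs]⟩)
    rintro ⟨i, c, d, hcd, hp⟩
    exact hs ⟨(i, c, d), hcd, hp⟩

private lemma two_diff {ts : Fin k → TermK k ℕ} (h1 : ¬ ∀ i, ts i = ts 0)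
    (h2 : ¬ ∃ i c d, c ≠ d ∧ (∀ j, ts j = if j = i then c else d)) :
    ∃ p q : Fin k, p ≠ q ∧ ts 0 ≠ ts p ∧ ts 0 ≠ ts q := by
  push_neg at h1
  obtain ⟨p, hp⟩ := h1
  by_contra hno
  push_neg at hno
  refine h2 ⟨p, ts p, ts 0, hp, fun j => ?_⟩
  by_cases hj : j = p
  · simp [hj]
  · rw [if_neg hj]
    exact (hno p j (fun h => hj h.symm) (Ne.symm hp)).symm

private lemma nf_wAK (hk : 3 ≤ k) (ts : Fin k → TermK k ℕ) (h : ∀ i, IsNFK (ts i)) :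
    IsNFK (wAK ts) := by
  rcases wAK_spec ts with ⟨hc, he⟩ | ⟨i, c, d, hcd, hp, he⟩ | ⟨h1, h2, he⟩
  · rw [he]; exact h 0
  · rw [he]
    have h1lt : 1 < k := by omega
    have h2lt : 2 < k := by omega
    have hcnf : IsNFK c := by have := h i; rwa [hp i, if_pos rfl] at this
    have hdnf : IsNFK d := by
      obtain ⟨m, hm, -⟩ := exists_third hk i i
      have := h m; rwa [hp m, if_neg hm] at this
    have hne1 : (⟨1, h1lt⟩ : Fin k) ≠ 0 := by simp [Fin.ext_iff]
    have hne2 : (⟨2, h2lt⟩ : Fin k) ≠ 0 := by simp [Fin.ext_iff]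
    refine IsNFK.w _ (fun l => ?_) ⟨⟨1, h1lt⟩, ⟨2, h2lt⟩, ?_, ?_, ?_⟩
    · by_cases hl : l = 0 <;> simp [hl, hcnf, hdnf]
    · simp [Fin.ext_iff]
    · simp [hne1, hcd]
    · simp [hne2, hcd]
  · rw [he]
    obtain ⟨p, q, hpq, h0p, h0q⟩ := two_diff h1 h2
    exact IsNFK.w _ h ⟨p, q, hpq, h0p, h0q⟩

private lemma up (hk : 3 ≤ k) (ts : Fin k → TermK k ℕ) (h : ∀ i, IsNFK (ts i)) (j : Fin k) :
    SubK (ts j) (wAK ts) := by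
  have hwnf := nf_wAK hk ts h
  rcases wAK_spec ts with ⟨hc, he⟩ | ⟨i, c, d, hcd, hp, he⟩ | ⟨h1, h2, he⟩
  · rw [he, hc j]
    exact Relation.ReflTransGen.refl
  · rw [he] at hwnf ⊢
    have hcnf : IsNFK c := by have := h i; rwa [hp i, if_pos rfl] at this
    have hdnf : IsNFK d := by
      obtain ⟨m, hm, -⟩ := exists_third hk i i
      have := h m; rwa [hp m, if_neg hm] at this
    have hcomp : ∀ l : Fin k, IsNFK ((fun l => if l = 0 then c else d) l) := fun l => by
      by_cases hl : l = 0 <;> simp [hl, hcnf, hdnf]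
    by_cases hj : j = i
    · refine Relation.ReflTransGen.single ⟨h j, hwnf, _, hcomp, rfl, 0, ?_⟩
      rw [hp j, if_pos hj]; simp
    · have h1lt : 1 < k := by omega
      have hne1 : (⟨1, h1lt⟩ : Fin k) ≠ 0 := by simp [Fin.ext_iff]
      refine Relation.ReflTransGen.single ⟨h j, hwnf, _, hcomp, rfl, ⟨1, h1lt⟩, ?_⟩
      rw [hp j, if_neg hj]
      simp [hne1]
  · rw [he] at hwnf ⊢
    exact Relation.ReflTransGen.single ⟨h j, hwnf, ts, h, rfl, j, rfl⟩

private lemma down (hk : 3 ≤ k) {a : TermK k ℕ} (bs : Fin k → TermK k ℕ)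
    (h : SubK a (wAK bs)) : (∃ j, SubK a (bs j)) ∨ a = wAK bs := by
  rcases wAK_spec bs with ⟨hc, he⟩ | ⟨i, c, d, hcd, hp, he⟩ | ⟨h1, h2, he⟩
  · left; exact ⟨0, he ▸ h⟩
  · rw [he] at h
    rcases Relation.ReflTransGen.cases_tail h with heq | ⟨t, hat, hstep⟩
    · right; rw [he]; exact heq.symm
    · obtain ⟨-, -, cs, -, hwcs, l, ht⟩ := hstep
      injection hwcs with hcs
      have hcl : cs l = if l = 0 then c else d := by rw [← hcs]
      rw [ht, hcl] at hat
      left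
      by_cases hl : l = 0
      · rw [if_pos hl] at hat
        exact ⟨i, by rw [hp i, if_pos rfl]; exact hat⟩
      · rw [if_neg hl] at hat
        obtain ⟨m, hm, -⟩ := exists_third hk i i
        exact ⟨m, by rw [hp m, if_neg hm]; exact hat⟩
  · rw [he] at h
    rcases Relation.ReflTransGen.cases_tail h with heq | ⟨t, hat, hstep⟩
    · right; rw [he]; exact heq.symm
    · obtain ⟨-, -, cs, -, hwcs, l, ht⟩ := hstep
      injection hwcs with hcs
      rw [ht, ← hcs] at hat
      exact Or.inl ⟨l, hat⟩

private lemma eqcase (hk : 3 ≤ k) (as bs : Fin k → TermK k ℕ)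
    (hA : ∀ i, IsNFK (as i)) (hB : ∀ i, IsNFK (bs i)) (h : wAK as = wAK bs) :
    (∃ j, SubK (as j) (bs j)) ∨ ∃ j, SubK (bs j) (as j) := by
  rcases wAK_spec as with ⟨hcA, heA⟩ | ⟨i, c, d, hcd, hpA, heA⟩ | ⟨h1A, h2A, heA⟩
  · right
    refine ⟨0, ?_⟩
    have hup := up hk bs hB 0
    rw [← h, heA] at hup
    exact hup
  · rcases wAK_spec bs with ⟨hcB, heB⟩ | ⟨i', c', d', hcd', hpB, heB⟩ | ⟨h1B, h2B, heB⟩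
    · left
      refine ⟨0, ?_⟩
      have hup := up hk as hA 0
      rw [h, heB] at hup
      exact hup
    · rw [heA, heB] at h
      injection h with hfun
      have hc' : c = c' := by simpa using congrFun hfun 0
      have h1lt : 1 < k := by omega
      have hne1 : (⟨1, h1lt⟩ : Fin k) ≠ 0 := by simp [Fin.ext_iff]
      have hd' : d = d' := by simpa [hne1] using congrFun hfun ⟨1, h1lt⟩
      by_cases hii : i = i'
      · left
        refine ⟨0, ?_⟩
        have : as 0 = bs 0 := by rw [hpA 0, hpB 0, hc', hd', hii]
        rw [this]
        exact Relation.ReflTransGen.refl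
      · obtain ⟨j, hji, hji'⟩ := exists_third hk i i'
        left
        refine ⟨j, ?_⟩
        have : as j = bs j := by rw [hpA j, hpB j, if_neg hji, if_neg hji', hd']
        rw [this]
        exact Relation.ReflTransGen.refl
    · exfalso
      rw [heA, heB] at h
      injection h with hfun
      exact h2B ⟨0, c, d, hcd, fun j => by rw [← hfun]⟩
  · rcases wAK_spec bs with ⟨hcB, heB⟩ | ⟨i', c', d', hcd', hpB, heB⟩ | ⟨h1B, h2B, heB⟩
    · left
      refine ⟨0, ?_⟩
      have hup := up hk as hA 0
      rw [h, heB] at hup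
      exact hup
    · exfalso
      rw [heA, heB] at h
      injection h with hfun
      exact h2A ⟨0, c', d', hcd', fun j => by rw [hfun]⟩
    · rw [heA, heB] at h
      injection h with hfun
      left
      exact ⟨0, by rw [congrFun hfun 0]; exact Relation.ReflTransGen.refl⟩

private lemma key (hk : 3 ≤ k) (as bs : Fin k → TermK k ℕ)
    (hA : ∀ i, IsNFK (as i)) (hB : ∀ i, IsNFK (bs i))
    (h1 : ∀ i, ¬ SubK (as i) (bs i)) (h2 : ∀ i, ¬ SubK (bs i) (as i)) :
    ¬ SubK (wAK as) (wAK bs) := by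
  intro h
  rcases down hk bs h with ⟨j, hj⟩ | heq
  · exact h1 j (Relation.ReflTransGen.trans (up hk as hA j) hj)
  · rcases eqcase hk as bs hA hB heq with ⟨j, hj⟩ | ⟨j, hj⟩
    · exact h1 j hj
    · exact h2 j hj

private lemma subK_var {x y : ℕ} (h : SubK (k := k) (.var x) (.var y)) : x = y := by
  rcases Relation.ReflTransGen.cases_tail h with heq | ⟨t, -, hstep⟩
  · injection heq with h'
    exact h'.symm
  · obtain ⟨-, -, cs, -, hwcs, -⟩ := hstep
    exact nomatch hwcs

end Statement18Aux

/-- Fix `k ≥ 3`. Then `Rₖ` is disjoint from the diagonal: there is no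
`r ∈ Aₖ` with `(r,r) ∈ Rₖ`. -/
theorem statement18 {k : ℕ} [NeZero k] (hk : 3 ≤ k) :
    ¬ ∃ r : TermK k ℕ, InRK r r := by
  rintro ⟨r, hr⟩
  suffices hinv : ∀ a b : TermK k ℕ, InRK a b → IsNFK a ∧ IsNFK b ∧ ¬ SubK a b ∧ ¬ SubK b a by
    exact (hinv r r hr).2.2.1 Relation.ReflTransGen.refl
  intro a b h
  induction h with
  | gen x y hxy =>
      exact ⟨.var x, .var y, fun h => hxy (subK_var h), fun h => hxy (subK_var h).symm⟩
  | close as bs h ih =>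
      have hA : ∀ i, IsNFK (as i) := fun i => (ih i).1
      have hB : ∀ i, IsNFK (bs i) := fun i => (ih i).2.1
      refine ⟨nf_wAK hk as hA, nf_wAK hk bs hB, ?_, ?_⟩
      · exact key hk as bs hA hB (fun i => (ih i).2.2.1) (fun i => (ih i).2.2.2)
      · exact key hk bs as hB hA (fun i => (ih i).2.2.2) (fun i => (ih i).2.2.1)
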